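/- arXiv:1803.07582 — 3 statements merged into one kernel-verified Lean document; each statement's English description precedes it below -/
import Mathlib

section
/- Let n ≥ 1 and D ∈ M_n(ℝ), and let λ ∈ ℝ satisfy 0 < |λ| < 2π. Then (exp(λD) − I)/(e^λ − 1) = Σ_{k=0}^∞ ( Σ_{l=0}^{k} (k!/(k−l)!) · B_{k−l} · D^{l+1}/(l+1)! ) · λ^k/k!, where B_m denotes the m-th Bernoulli number (with the convention Σ_{m=0}^∞ B_m x^m/m! = x/(e^x − 1)), the series on the right converging in M_n(ℝ). -/
open scoped BigOperators

section AuxPWP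
open Real Finset
open scoped Nat

lemma bern_bound (m : ℕ) : |(bernoulli m : ℝ)| * (2 * π) ^ m ≤ 4 * (m ! : ℝ) := by
  match m with
  | 0 => norm_num
  | 1 =>
      have h1 : |((bernoulli 1 : ℚ) : ℝ)| = 1/2 := by rw [bernoulli_one]; norm_num
      rw [h1]
      norm_num
      nlinarith [Real.pi_le_four, Real.pi_pos]
  | (m + 2) =>
      rcases Nat.even_or_odd (m + 2) with he | ho
      · obtain ⟨j, hj⟩ := he
        obtain ⟨k, hk⟩ : ∃ k, m + 2 = 2 * k := ⟨j, by omega⟩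
        have hk0 : k ≠ 0 := by omega
        rw [hk]
        have hz := hasSum_zeta_nat hk0
        have hnn : (0:ℝ) ≤ (-1 : ℝ) ^ (k + 1) * (2 : ℝ) ^ (2 * k - 1) * π ^ (2 * k) *
            bernoulli (2 * k) / (2 * k)! := hz.nonneg fun n => by positivity
        have hle : (-1 : ℝ) ^ (k + 1) * (2 : ℝ) ^ (2 * k - 1) * π ^ (2 * k) *
            bernoulli (2 * k) / (2 * k)! ≤ π ^ 2 / 6 := by
          refine hasSum_le (fun n => ?_) hz hasSum_zeta_two
          rcases Nat.eq_zero_or_pos n with h | h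
          · subst h; simp [zero_pow, hk0]
          · have h1 : (1:ℝ) ≤ (n:ℝ) := by exact_mod_cast h
            have : (n:ℝ) ^ 2 ≤ (n:ℝ) ^ (2 * k) := pow_le_pow_right₀ h1 (by omega)
            exact one_div_le_one_div_of_le (by positivity) this
        have hpi : π ^ 2 / 6 ≤ 2 := by nlinarith [Real.pi_lt_d2, Real.pi_pos]
        have habs : |(-1 : ℝ) ^ (k + 1) * (2 : ℝ) ^ (2 * k - 1) * π ^ (2 * k) *
            bernoulli (2 * k) / (2 * k)!|
            = (2 : ℝ) ^ (2 * k - 1) * π ^ (2 * k) * |(bernoulli (2 * k) : ℝ)| / (2 * k)! := by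
          rw [abs_div, abs_mul, abs_mul, abs_mul, abs_pow, abs_pow, abs_pow, abs_neg, abs_one,
            one_pow, one_mul, abs_of_nonneg Real.pi_pos.le, abs_of_nonneg (by norm_num : (0:ℝ) ≤ 2),
            Nat.abs_cast]
        have key : (2 : ℝ) ^ (2 * k - 1) * π ^ (2 * k) * |(bernoulli (2 * k) : ℝ)| / (2 * k)! ≤ 2 := by
          rw [← habs, abs_of_nonneg hnn]; linarith
        have hfpos : (0:ℝ) < (2 * k)! := by exact_mod_cast Nat.factorial_pos _
        rw [div_le_iff₀ hfpos] at key
        have h2k : (2 : ℝ) ^ (2 * k) = 2 * 2 ^ (2 * k - 1) := by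
          rw [← pow_succ']; congr 1; omega
        rw [mul_pow, h2k]
        nlinarith [key, pow_pos Real.pi_pos (2 * k), abs_nonneg (bernoulli (2*k) : ℝ)]
      · rw [bernoulli_eq_bernoulli'_of_ne_one (by omega), bernoulli'_eq_zero_of_odd ho (by omega)]
        simp

lemma bern_summable_norm {lam : ℝ} (h2 : |lam| < 2 * π) :
    Summable fun m : ℕ => ‖(bernoulli m : ℝ) * lam ^ m / (m ! : ℝ)‖ := by
  have h2π : (0:ℝ) < 2 * π := by positivity
  have hr0 : (0:ℝ) ≤ |lam| / (2 * π) := by positivity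
  have hr1 : |lam| / (2 * π) < 1 := (div_lt_one h2π).mpr h2
  refine Summable.of_nonneg_of_le (fun m => norm_nonneg _)
    (fun m => ?_) ((summable_geometric_of_lt_one hr0 hr1).mul_left 4)
  have hb := bern_bound m
  have hfpos : (0:ℝ) < (m ! : ℝ) := by exact_mod_cast Nat.factorial_pos m
  have hppos : (0:ℝ) < (2 * π) ^ m := by positivity
  rw [Real.norm_eq_abs, abs_div, abs_mul, abs_pow, Nat.abs_cast, div_pow, mul_div_assoc,
    ← mul_div_assoc, ← mul_div_assoc, div_le_div_iff₀ hfpos hppos]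
  nlinarith [mul_le_mul_of_nonneg_right hb (pow_nonneg (abs_nonneg lam) m),
    pow_nonneg (abs_nonneg lam) m]

lemma bern_hasSum {lam : ℝ} (h0 : lam ≠ 0) (h2 : |lam| < 2 * π) :
    HasSum (fun m : ℕ => (bernoulli m : ℝ) * lam ^ m / (m ! : ℝ))
      (lam / (Real.exp lam - 1)) := by
  have hne : Real.exp lam - 1 ≠ 0 := by
    intro h
    refine h0 (Real.exp_eq_exp.mp ?_)
    rw [Real.exp_zero]; linarith
  have hA := bern_summable_norm h2
  have hS := hA.of_norm.hasSum
  set S := ∑' m : ℕ, (bernoulli m : ℝ) * lam ^ m / (m ! : ℝ) with hSdef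
  have he : HasSum (fun m : ℕ => lam ^ m / (m ! : ℝ)) (Real.exp lam) := by
    rw [Real.exp_eq_exp_ℝ]
    exact NormedSpace.expSeries_div_hasSum_exp lam
  have hb : HasSum (fun m : ℕ => if m = 0 then (0:ℝ) else lam ^ m / (m ! : ℝ))
      (Real.exp lam - 1) := by
    have hfe : (fun m : ℕ => if m = 0 then (0:ℝ) else lam ^ m / (m ! : ℝ)) =
        fun m : ℕ => lam ^ m / (m ! : ℝ) - (if m = 0 then (1:ℝ) else 0) := by
      funext m
      cases m <;> simp
    rw [hfe]
    exact he.sub (hasSum_ite_eq 0 (1:ℝ))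
  have hbn : Summable fun m : ℕ => ‖(if m = 0 then (0:ℝ) else lam ^ m / (m ! : ℝ))‖ := by
    refine Summable.of_nonneg_of_le (fun m => norm_nonneg _) (fun m => ?_)
      (Real.summable_pow_div_factorial |lam|)
    cases m with
    | zero => simp
    | succ m =>
        simp only [Nat.succ_ne_zero, if_false, Real.norm_eq_abs, abs_div, abs_pow, Nat.abs_cast]
        exact le_of_eq rfl
  have hC := hasSum_sum_range_mul_of_summable_norm hA hbn
  rw [hb.tsum_eq, ← hSdef] at hC
  have hterm : ∀ k : ℕ, (∑ j ∈ Finset.range (k + 1),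
      ((bernoulli j : ℝ) * lam ^ j / (j ! : ℝ)) *
        (if k - j = 0 then (0:ℝ) else lam ^ (k - j) / (((k - j)! : ℝ))))
      = if k = 1 then lam else 0 := by
    intro k
    rw [Finset.sum_range_succ]
    simp only [Nat.sub_self, if_pos rfl, mul_zero, add_zero]
    have hcong : ∀ j ∈ Finset.range k,
        ((bernoulli j : ℝ) * lam ^ j / (j ! : ℝ)) *
          (if k - j = 0 then (0:ℝ) else lam ^ (k - j) / (((k - j)! : ℝ)))
        = ((k.choose j : ℝ) * (bernoulli j : ℝ)) * (lam ^ k / (k ! : ℝ)) := by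
      intro j hj
      have hjk : j < k := Finset.mem_range.mp hj
      have hnj : ¬ (k - j = 0) := by omega
      rw [if_neg hnj]
      have hcast : (k.choose j : ℝ) = (k ! : ℝ) / ((j ! : ℝ) * (((k - j)! : ℝ))) :=
        Nat.cast_choose ℝ hjk.le
      have hp : lam ^ j * lam ^ (k - j) = lam ^ k := by
        rw [← pow_add]; congr 1; omega
      have hj0 : (j ! : ℝ) ≠ 0 := by exact_mod_cast (Nat.factorial_pos j).ne'
      have hkj0 : (((k - j)! : ℝ)) ≠ 0 := by exact_mod_cast (Nat.factorial_pos (k - j)).ne'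
      have hk0 : (k ! : ℝ) ≠ 0 := by exact_mod_cast (Nat.factorial_pos k).ne'
      rw [hcast, ← hp]
      field_simp
    rw [Finset.sum_congr rfl hcong, ← Finset.sum_mul]
    have hsb : (∑ j ∈ Finset.range k, (k.choose j : ℝ) * (bernoulli j : ℝ))
        = if k = 1 then 1 else 0 := by
      have h := congrArg (fun q : ℚ => (q : ℝ)) (sum_bernoulli k)
      push_cast at h
      simpa [apply_ite (fun q : ℚ => (q : ℝ))] using h
    rw [hsb]
    split_ifs with h
    · subst h; simp
    · simp
  have hC2 : HasSum (fun k : ℕ => if k = 1 then lam else 0) (S * (Real.exp lam - 1)) := by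
    rw [← funext hterm] at *
    exact hC
  have huniq : lam = S * (Real.exp lam - 1) := HasSum.unique (hasSum_ite_eq 1 lam) hC2
  have hSval : S = lam / (Real.exp lam - 1) := by
    rw [eq_div_iff hne]; exact huniq.symm
  rw [← hSval]
  exact hS

theorem aux_pwp {A : Type*} [NormedRing A] [NormedAlgebra ℝ A] [CompleteSpace A]
    (D : A) {lam : ℝ} (h0 : lam ≠ 0) (h2 : |lam| < 2 * π) :
    HasSum
      (fun k : ℕ =>
        (lam ^ k / (Nat.factorial k : ℝ)) •
          ∑ l ∈ Finset.range (k + 1),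
            (((Nat.factorial k : ℝ) / (Nat.factorial (k - l) : ℝ)) * (bernoulli (k - l) : ℝ)) •
              ((Nat.factorial (l + 1) : ℝ)⁻¹ • D ^ (l + 1)))
      ((Real.exp lam - 1)⁻¹ • (NormedSpace.exp (lam • D) - 1)) := by
  have hne : Real.exp lam - 1 ≠ 0 := by
    intro h
    refine h0 (Real.exp_eq_exp.mp ?_)
    rw [Real.exp_zero]; linarith
  have hfact : ∀ m : ℕ, ((m ! : ℝ)) ≠ 0 := fun m => by
    exact_mod_cast (Nat.factorial_pos m).ne'
  -- the matrix-valued series for (exp (lam • D) - 1)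
  have hexp : HasSum (fun m : ℕ => ((m ! : ℝ))⁻¹ • (lam • D) ^ m)
      (NormedSpace.exp (lam • D)) := NormedSpace.exp_series_hasSum_exp' (lam • D)
  have term_eq : ∀ l : ℕ, (((l + 1)! : ℝ))⁻¹ • (lam • D) ^ (l + 1) =
      lam • ((lam ^ l / (((l + 1)! : ℝ))) • D ^ (l + 1)) := by
    intro l
    rw [smul_pow, smul_smul, smul_smul]
    congr 1
    field_simp [pow_succ]
    ring
  have h1 : HasSum (fun l : ℕ => (((l + 1)! : ℝ))⁻¹ • (lam • D) ^ (l + 1))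
      (NormedSpace.exp (lam • D) - 1) := by
    rw [hasSum_nat_add_iff (f := fun m : ℕ => ((m ! : ℝ))⁻¹ • (lam • D) ^ m) 1]
    simpa using hexp
  have hg : HasSum (fun l : ℕ => (lam ^ l / (((l + 1)! : ℝ))) • D ^ (l + 1))
      (lam⁻¹ • (NormedSpace.exp (lam • D) - 1)) := by
    have h1' := h1
    rw [funext term_eq] at h1'
    have h2' := h1'.const_smul lam⁻¹
    simpa [smul_smul, ← mul_assoc, inv_mul_cancel₀ h0] using h2'
  have hgn : Summable fun l : ℕ => ‖(lam ^ l / (((l + 1)! : ℝ))) • D ^ (l + 1)‖ := by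
    have hn := NormedSpace.norm_expSeries_summable' (𝕂 := ℝ) (lam • D)
    have hn1 : Summable fun l : ℕ => ‖(((l + 1)! : ℝ))⁻¹ • (lam • D) ^ (l + 1)‖ :=
      (summable_nat_add_iff 1).mpr hn
    simp only [term_eq, norm_smul, Real.norm_eq_abs] at hn1
    have h3 := hn1.mul_left |lam|⁻¹
    simp only [← mul_assoc, inv_mul_cancel₀ (abs_ne_zero.mpr h0), one_mul] at h3
    simpa only [norm_smul, Real.norm_eq_abs] using h3
  -- the scalar Bernoulli series, smul'd onto 1
  have hf : HasSum (fun j : ℕ => ((bernoulli j : ℝ) * lam ^ j / (j ! : ℝ)) • (1 : A))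
      ((lam / (Real.exp lam - 1)) • (1 : A)) := (bern_hasSum h0 h2).smul_const 1
  have hfn : Summable fun j : ℕ => ‖((bernoulli j : ℝ) * lam ^ j / (j ! : ℝ)) • (1 : A)‖ := by
    simp only [norm_smul]
    exact (bern_summable_norm h2).mul_right _
  have hmain := hasSum_sum_range_mul_of_summable_norm hfn hgn
  rw [hf.tsum_eq, hg.tsum_eq] at hmain
  have hval : ((lam / (Real.exp lam - 1)) • (1 : A)) *
      (lam⁻¹ • (NormedSpace.exp (lam • D) - 1)) =
      (Real.exp lam - 1)⁻¹ • (NormedSpace.exp (lam • D) - 1) := by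
    rw [smul_mul_assoc, one_mul, smul_smul]
    congr 1
    field_simp
  rw [hval] at hmain
  have hterm : ∀ k : ℕ,
      ((lam ^ k / (k ! : ℝ)) •
        ∑ l ∈ Finset.range (k + 1),
          (((k ! : ℝ) / (((k - l)! : ℝ))) * (bernoulli (k - l) : ℝ)) •
            ((((l + 1)! : ℝ))⁻¹ • D ^ (l + 1)))
      = ∑ j ∈ Finset.range (k + 1),
          (((bernoulli j : ℝ) * lam ^ j / (j ! : ℝ)) • (1 : A)) *
            ((lam ^ (k - j) / (((k - j + 1)! : ℝ))) • D ^ (k - j + 1)) := by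
    intro k
    rw [← Finset.sum_range_reflect (fun j => (((bernoulli j : ℝ) * lam ^ j / (j ! : ℝ)) • (1 : A)) *
        ((lam ^ (k - j) / (((k - j + 1)! : ℝ))) • D ^ (k - j + 1))) (k + 1)]
    rw [Finset.smul_sum]
    refine Finset.sum_congr rfl fun l hl => ?_
    have hlk : l ≤ k := by have := Finset.mem_range.mp hl; omega
    have e1 : k + 1 - 1 - l = k - l := by omega
    have e2 : k - (k - l) = l := by omega
    rw [e1, e2]
    rw [smul_mul_assoc, one_mul, smul_smul, smul_smul, smul_smul]
    congr 1
    have hp : lam ^ (k - l) * lam ^ l = lam ^ k := by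
      rw [← pow_add]; congr 1; omega
    rw [← hp]
    field_simp
  rw [funext hterm]
  exact hmain

end AuxPWP

/-- For `0 < |λ| < 2π`, the PWP matrix `(exp(λD) − I)/(e^λ − 1)` is given by the convergent
series `∑_{k=0}^∞ (∑_{l=0}^{k} (k)_l B_{k−l} D^{l+1}/(l+1)!) λ^k/k!`, where `B_m` are the
Bernoulli numbers (convention `∑ B_m x^m/m! = x/(e^x − 1)`). -/
theorem pwp_eq_bernoulli_series {n : ℕ} (hn : 1 ≤ n) (D : Matrix (Fin n) (Fin n) ℝ)
    (lam : ℝ) (hlam : 0 < |lam|) (hlam' : |lam| < 2 * Real.pi) :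
    HasSum
      (fun k : ℕ =>
        (lam ^ k / (Nat.factorial k : ℝ)) •
          ∑ l ∈ Finset.range (k + 1),
            (((Nat.factorial k : ℝ) / (Nat.factorial (k - l) : ℝ)) * (bernoulli (k - l) : ℝ)) •
              ((Nat.factorial (l + 1) : ℝ)⁻¹ • D ^ (l + 1)))
      ((Real.exp lam - 1)⁻¹ • (NormedSpace.exp (lam • D) - 1)) := by
  letI : SeminormedRing (Matrix (Fin n) (Fin n) ℝ) := Matrix.linftyOpSemiNormedRing
  letI : NormedRing (Matrix (Fin n) (Fin n) ℝ) := Matrix.linftyOpNormedRing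
  letI : NormedAlgebra ℝ (Matrix (Fin n) (Fin n) ℝ) := Matrix.linftyOpNormedAlgebra
  exact aux_pwp D (abs_pos.mp hlam) hlam'
end

section
/- Let n ≥ 1 and let D ∈ M_n(ℝ) have nonnegative entries with m = Σ_{i,j} D_{ij} > 0, and let π be a partition of {1,…,n}. For λ > 0 write T(λ) = (exp(λD) − I)/(e^λ − 1), M(λ) = Σ_{i,j} T(λ)_{ij}, E_i(λ) = Σ_j T(λ)_{ij}, F_j(λ) = Σ_i T(λ)_{ji}, and Q_λ(π) = Σ_{i ∼ j} ( T(λ)_{ij}/M(λ) − E_i(λ) F_j(λ)/M(λ)² ), the sum over ordered pairs (i,j) of nodes lying in the same block of π. Then lim_{λ → 0⁺} Q_λ(π) = Q(π), where Q(π) = Σ_{i ∼ j} ( D_{ij}/m − (d_i^{in}/m)(d_j^{out}/m) ) is the Girvan–Newman modularity, with d_i^{in} = Σ_j D_{ij} and d_j^{out} = Σ_i D_{ij}. -/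
open scoped BigOperators Classical

/-- Girvan–Newman-type modularity of a matrix `A` with respect to an equivalence relation `r`:
`∑_{i ∼ j} (A_{ij}/M − (E_i/M)(F_j/M))` where `M = ∑_{i,j} A_{ij}`, `E_i = ∑_j A_{ij}` is the
`i`-th row sum and `F_j = ∑_i A_{ij}` is the `j`-th column sum. -/
noncomputable def modularity {n : ℕ} (A : Matrix (Fin n) (Fin n) ℝ)
    (r : Fin n → Fin n → Prop) : ℝ :=
  ∑ i : Fin n, ∑ j : Fin n,
    if r i j then
      A i j / (∑ a : Fin n, ∑ b : Fin n, A a b) -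
        (∑ b : Fin n, A i b) / (∑ a : Fin n, ∑ b : Fin n, A a b) *
          ((∑ a : Fin n, A a j) / (∑ a : Fin n, ∑ b : Fin n, A a b))
    else 0

/-- The PWP matrix `T(D,λ) = (exp(λD) − I)/(e^λ − 1)`. -/
noncomputable def pwpMatrix {n : ℕ} (D : Matrix (Fin n) (Fin n) ℝ) (lam : ℝ) :
    Matrix (Fin n) (Fin n) ℝ :=
  (Real.exp lam - 1)⁻¹ • (NormedSpace.exp (lam • D) - 1)


-- Auxiliary lemma: the PWP matrix tends to `D` entrywise as `λ → 0⁺`.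
lemma pwp_tendsto {n : ℕ} (D : Matrix (Fin n) (Fin n) ℝ) :
    Filter.Tendsto (fun lam : ℝ => pwpMatrix D lam)
      (nhdsWithin 0 (Set.Ioi 0)) (nhds D) := by
  letI : SeminormedRing (Matrix (Fin n) (Fin n) ℝ) := Matrix.linftyOpSemiNormedRing
  letI : NormedRing (Matrix (Fin n) (Fin n) ℝ) := Matrix.linftyOpNormedRing
  letI : NormedAlgebra ℝ (Matrix (Fin n) (Fin n) ℝ) := Matrix.linftyOpNormedAlgebra
  have hcs : CompleteSpace (Matrix (Fin n) (Fin n) ℝ) := by infer_instance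
  have h1 : HasDerivAt (fun t : ℝ => NormedSpace.exp (t • D)) D 0 := by
    have h1' := hasDerivAt_exp_smul_const (𝕂 := ℝ) D 0
    simp only [zero_smul, NormedSpace.exp_zero, one_mul] at h1'
    exact h1'
  have h2 : Filter.Tendsto (fun t : ℝ => t⁻¹ • (NormedSpace.exp (t • D) - 1))
      (nhdsWithin 0 (Set.Ioi 0)) (nhds D) := by
    have := hasDerivAt_iff_tendsto_slope.mp h1
    have h3 := this.mono_left (nhdsWithin_mono 0 (by
      intro x hx
      exact ne_of_gt hx : Set.Ioi (0:ℝ) ⊆ {(0:ℝ)}ᶜ))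
    refine h3.congr ?_
    intro t
    simp [slope, NormedSpace.exp_zero, vsub_eq_sub]
  have h4 : Filter.Tendsto (fun t : ℝ => t * (Real.exp t - 1)⁻¹)
      (nhdsWithin 0 (Set.Ioi 0)) (nhds 1) := by
    have h5 : HasDerivAt (fun t : ℝ => Real.exp t - 1) 1 0 := by
      simpa using (Real.hasDerivAt_exp 0).sub_const 1
    have h6 := hasDerivAt_iff_tendsto_slope.mp h5
    have h7 := h6.mono_left (nhdsWithin_mono 0 (by
      intro x hx
      exact ne_of_gt hx : Set.Ioi (0:ℝ) ⊆ {(0:ℝ)}ᶜ))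
    have h8 : Filter.Tendsto (fun t : ℝ => (Real.exp t - 1) / t)
        (nhdsWithin 0 (Set.Ioi 0)) (nhds 1) := by
      refine h7.congr ?_
      intro t
      simp [slope, div_eq_inv_mul]
    have h9 := h8.inv₀ one_ne_zero
    simp only [inv_one] at h9
    refine h9.congr' ?_
    filter_upwards [self_mem_nhdsWithin] with t ht
    rw [Set.mem_Ioi] at ht
    field_simp
  have h10 := h4.smul h2
  simp only [one_smul] at h10
  refine h10.congr' ?_
  filter_upwards [self_mem_nhdsWithin] with t ht
  rw [Set.mem_Ioi] at ht
  unfold pwpMatrix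
  rw [smul_smul, mul_comm t, mul_assoc, mul_inv_cancel₀ (ne_of_gt ht), mul_one]

-- Auxiliary lemma: modularity is continuous in the matrix at a point with nonzero total weight.
lemma modularity_continuousAt {n : ℕ} (r : Fin n → Fin n → Prop)
    (D : Matrix (Fin n) (Fin n) ℝ)
    (hm : (∑ a : Fin n, ∑ b : Fin n, D a b) ≠ 0) :
    ContinuousAt (fun A : Matrix (Fin n) (Fin n) ℝ => modularity A r) D := by
  have he : ∀ a b : Fin n, Continuous (fun A : Matrix (Fin n) (Fin n) ℝ => A a b) := by
    intro a b
    exact (continuous_apply b).comp (continuous_apply a)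
  have hS : Continuous (fun A : Matrix (Fin n) (Fin n) ℝ => ∑ a : Fin n, ∑ b : Fin n, A a b) :=
    continuous_finset_sum _ fun a _ => continuous_finset_sum _ fun b _ => he a b
  unfold modularity
  apply tendsto_finset_sum
  intro i _
  apply tendsto_finset_sum
  intro j _
  by_cases h : r i j
  · simp only [h, if_true]
    have hrow : Continuous (fun A : Matrix (Fin n) (Fin n) ℝ => ∑ b : Fin n, A i b) :=
      continuous_finset_sum _ fun b _ => he i b
    have hcol : Continuous (fun A : Matrix (Fin n) (Fin n) ℝ => ∑ a : Fin n, A a j) :=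
      continuous_finset_sum _ fun a _ => he a j
    exact (( (he i j).continuousAt.div hS.continuousAt hm).sub
      ((hrow.continuousAt.div hS.continuousAt hm).mul
        (hcol.continuousAt.div hS.continuousAt hm)))
  · simp only [h, if_false]
    exact continuousAt_const

/-- For a nonnegative weighted network `D` with total weight `m > 0` and a partition (given by
an equivalence relation `r`) of the nodes, the deformed modularity `Q_λ(π)`, built from the PWP
matrix `T(D,λ)`, tends to the Girvan–Newman modularity `Q(π)` as `λ → 0⁺`. -/
theorem deformed_modularity_tendsto_modularity {n : ℕ} (hn : 1 ≤ n)
    (D : Matrix (Fin n) (Fin n) ℝ) (hD : ∀ i j, 0 ≤ D i j)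
    (hm : 0 < ∑ i : Fin n, ∑ j : Fin n, D i j)
    (r : Fin n → Fin n → Prop) (hr : Equivalence r) :
    Filter.Tendsto (fun lam : ℝ => modularity (pwpMatrix D lam) r)
      (nhdsWithin 0 (Set.Ioi 0)) (nhds (modularity D r)) := by
  exact (modularity_continuousAt r D (ne_of_gt hm)).tendsto.comp (pwp_tendsto D)
end

section
/- For n ≥ 1, let r_n denote the number of rankings of the set {1,…,n}, i.e., the number of total preorders on {1,…,n} (equivalently, the number of pairs consisting of a partition of {1,…,n} together with a linear order on its blocks), and set r_0 = 0. Then the exponential generating function of (r_n) satisfies Σ_{n=0}^∞ r_n x^n/n! = (e^x − 1)/(2 − e^x) as an identity of formal power series over ℚ; equivalently, (2 − e^x) · Σ_{n=0}^∞ r_n x^n/n! = e^x − 1. -/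
/-- A ranking on `Fin n` is a relation of the form `i ≤ j ↔ f i ≤ f j` for some
`f : Fin n → ℕ`; equivalently it is a total preorder, equivalently a partition together with
a linear order on its blocks. -/
def IsRanking {n : ℕ} (R : Fin n → Fin n → Prop) : Prop :=
  ∃ f : Fin n → ℕ, ∀ i j, R i j ↔ f i ≤ f j

/-- The number of rankings (total preorders) on `{1, …, n}`. -/
noncomputable def numRankings (n : ℕ) : ℕ :=
  Nat.card {R : Fin n → Fin n → Prop // IsRanking R}

open Finset

/-- General version of `IsRanking` for an arbitrary type. -/
private def IsRk {α : Type} (R : α → α → Prop) : Prop :=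
  ∃ f : α → ℕ, ∀ i j, R i j ↔ f i ≤ f j

private def Rk (α : Type) := {R : α → α → Prop // IsRk R}

private instance {α : Type} [Finite α] : Finite (Rk α) := by
  unfold Rk; infer_instance

private def rkCongr {α β : Type} (e : α ≃ β) : Rk α ≃ Rk β where
  toFun R := ⟨fun i j => R.1 (e.symm i) (e.symm j), by
    obtain ⟨f, hf⟩ := R.2
    exact ⟨f ∘ e.symm, fun i j => hf _ _⟩⟩
  invFun R := ⟨fun i j => R.1 (e i) (e j), by
    obtain ⟨f, hf⟩ := R.2
    exact ⟨f ∘ e, fun i j => hf _ _⟩⟩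
  left_inv R := Subtype.ext (by funext i j; simp)
  right_inv R := Subtype.ext (by funext i j; simp)

private lemma numRankings_eq (n : ℕ) : numRankings n = Nat.card (Rk (Fin n)) := rfl

private lemma card_rk (α : Type) [Fintype α] :
    Nat.card (Rk α) = numRankings (Fintype.card α) := by
  rw [numRankings_eq]
  exact Nat.card_congr (rkCongr (Fintype.equivFin α))

private lemma numRankings_zero : numRankings 0 = 1 := by
  rw [numRankings_eq]
  haveI : Subsingleton (Rk (Fin 0)) :=
    ⟨fun x y => Subtype.ext (by funext i; exact i.elim0)⟩
  have hne : Nonempty (Rk (Fin 0)) :=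
    ⟨⟨fun _ _ => True, ⟨fun _ => 0, fun i => i.elim0⟩⟩⟩
  exact Nat.card_eq_one_iff_unique.mpr ⟨‹_›, hne⟩

section Decomp

variable {α : Type} [Fintype α] [DecidableEq α]

open Classical in
/-- The set of minimal elements of a relation. -/
private noncomputable def minSet (R : α → α → Prop) : Finset α :=
  univ.filter (fun i => ∀ j, R i j)

open Classical in
private lemma mem_minSet {R : α → α → Prop} {i : α} : i ∈ minSet R ↔ ∀ j, R i j := by
  simp [minSet]

private lemma minSet_nonempty [Nonempty α] (R : Rk α) : (minSet R.1).Nonempty := by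
  obtain ⟨f, hf⟩ := R.2
  obtain ⟨i, -, hi⟩ := Finset.exists_min_image univ f univ_nonempty
  exact ⟨i, mem_minSet.mpr fun j => (hf i j).mpr (hi j (mem_univ j))⟩

/-- Glue a nonempty "bottom block" `S` and a ranking on its complement into a ranking. -/
private noncomputable def glue
    (x : Σ S : {S : Finset α // S.Nonempty}, Rk {i : α // i ∉ S.1}) : Rk α := by
  obtain ⟨⟨S, hS⟩, ⟨R', hR'⟩⟩ := x
  refine ⟨fun i j => i ∈ S ∨ ∃ (hi : i ∉ S) (hj : j ∉ S), R' ⟨i, hi⟩ ⟨j, hj⟩, ?_⟩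
  obtain ⟨f, hf⟩ := hR'
  refine ⟨fun i => if h : i ∈ S then 0 else f ⟨i, h⟩ + 1, fun i j => ?_⟩
  by_cases hi : i ∈ S <;> by_cases hj : j ∈ S <;>
    simp [hi, hj, hf, Nat.succ_le_succ_iff]

private lemma glue_rel (S : {S : Finset α // S.Nonempty}) (R' : Rk {i : α // i ∉ S.1})
    (i j : α) :
    (glue ⟨S, R'⟩).1 i j ↔ i ∈ S.1 ∨ ∃ (hi : i ∉ S.1) (hj : j ∉ S.1), R'.1 ⟨i, hi⟩ ⟨j, hj⟩ := by
  obtain ⟨S, hS⟩ := S; obtain ⟨R', hR'⟩ := R'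
  rfl

/-- Split a ranking into its bottom block and the induced ranking on the complement. -/
private noncomputable def split [Nonempty α] (R : Rk α) :
    Σ S : {S : Finset α // S.Nonempty}, Rk {i : α // i ∉ S.1} :=
  ⟨⟨minSet R.1, minSet_nonempty R⟩,
    ⟨fun i j => R.1 i j, by
      obtain ⟨f, hf⟩ := R.2
      exact ⟨fun i => f i, fun i j => hf _ _⟩⟩⟩

private lemma glue_split [Nonempty α] (R : Rk α) : glue (split R) = R := by
  obtain ⟨f, hf⟩ := R.2
  apply Subtype.ext
  funext i j
  apply propext
  unfold split
  refine (glue_rel _ _ i j).trans ?_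
  simp only []
  constructor
  · rintro (hi | ⟨hi, hj, h⟩)
    · exact mem_minSet.mp hi j
    · exact h
  · intro h
    by_cases hi : i ∈ minSet R.1
    · exact Or.inl hi
    · refine Or.inr ⟨hi, fun hj => hi (mem_minSet.mpr fun k => ?_), h⟩
      exact (hf i k).mpr (le_trans ((hf i j).mp h) ((hf j k).mp (mem_minSet.mp hj k)))

private lemma glue_inj [Nonempty α] :
    Function.Injective (glue (α := α)) := by
  rintro ⟨⟨S1, h1⟩, ⟨R1, hR1⟩⟩ ⟨⟨S2, h2⟩, ⟨R2, hR2⟩⟩ h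
  have hv : ∀ i j, ((glue ⟨⟨S1, h1⟩, ⟨R1, hR1⟩⟩).1 i j ↔ (glue ⟨⟨S2, h2⟩, ⟨R2, hR2⟩⟩).1 i j) := by
    intro i j; rw [congrArg Subtype.val h]
  have hchar : ∀ (S : Finset α) (hS : S.Nonempty) (R' : Rk {i : α // i ∉ S}) (i : α),
      i ∈ S ↔ ∀ j, (glue ⟨⟨S, hS⟩, R'⟩).1 i j := by
    intro S hS R' i
    constructor
    · intro hi j
      exact (glue_rel _ _ _ _).mpr (Or.inl hi)
    · intro hall
      by_contra hi
      obtain ⟨j0, hj0⟩ := hS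
      rcases (glue_rel _ _ _ _).mp (hall j0) with h' | ⟨-, hj0', -⟩
      · exact hi h'
      · exact hj0' hj0
  have hS : S1 = S2 := by
    ext i
    rw [hchar S1 h1 ⟨R1, hR1⟩ i, hchar S2 h2 ⟨R2, hR2⟩ i]
    exact ⟨fun ha j => (hv i j).mp (ha j), fun ha j => (hv i j).mpr (ha j)⟩
  subst hS
  have hR : R1 = R2 := by
    funext i j
    apply propext
    have h1' := hv i.1 j.1
    have h1' := (glue_rel _ _ _ _).symm.trans (h1'.trans (glue_rel _ _ _ _))
    simpa [i.2, j.2] using h1'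
  subst hR
  rfl

private noncomputable def decomp [Nonempty α] :
    Rk α ≃ Σ S : {S : Finset α // S.Nonempty}, Rk {i : α // i ∉ S.1} :=
  (Equiv.ofBijective glue ⟨glue_inj, fun R => ⟨split R, glue_split R⟩⟩).symm

end Decomp

open Classical in
private lemma nat_card_sigma {ι : Type} [Fintype ι] {β : ι → Type} [∀ i, Finite (β i)] :
    Nat.card (Σ i, β i) = ∑ i, Nat.card (β i) := by
  letI : ∀ i, Fintype (β i) := fun i => Fintype.ofFinite _
  simp [Nat.card_eq_fintype_card, Fintype.card_sigma]

private lemma card_compl_subtype {n : ℕ} (S : Finset (Fin n)) :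
    Fintype.card {i : Fin n // i ∉ S} = n - S.card := by
  classical
  have : Fintype.card {i : Fin n // i ∉ S} = Fintype.card ((Sᶜ : Finset (Fin n)) : Finset (Fin n)) := by
    apply Fintype.card_congr
    exact Equiv.subtypeEquivRight (by simp)
  rw [this]
  simp [Finset.card_compl]

/-- The key recurrence. -/
private lemma rankings_rec (n : ℕ) (hn : n ≠ 0) :
    ∑ k ∈ range (n + 1), n.choose k * numRankings (n - k) = 2 * numRankings n := by
  classical
  haveI : Nonempty (Fin n) := ⟨⟨0, Nat.pos_of_ne_zero hn⟩⟩
  have h1 : numRankings n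
      = ∑ S : {S : Finset (Fin n) // S.Nonempty}, numRankings (n - S.1.card) := by
    rw [numRankings_eq, Nat.card_congr (decomp (α := Fin n)), nat_card_sigma]
    refine Finset.sum_congr rfl fun S _ => ?_
    rw [card_rk, card_compl_subtype]
  -- convert subtype sum to a filtered sum
  have h2 : ∑ S : {S : Finset (Fin n) // S.Nonempty}, numRankings (n - S.1.card)
      = ∑ S ∈ univ.filter (fun S : Finset (Fin n) => S.Nonempty),
          numRankings (n - S.card) := by
    rw [Finset.sum_subtype (p := fun S : Finset (Fin n) => S.Nonempty)
      (univ.filter fun S : Finset (Fin n) => S.Nonempty)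
      (by simp) (fun S => numRankings (n - S.card))]
  have h3 : ∑ S : Finset (Fin n), numRankings (n - S.card)
      = ∑ S ∈ univ.filter (fun S : Finset (Fin n) => S.Nonempty), numRankings (n - S.card)
        + numRankings n := by
    rw [← Finset.sum_filter_add_sum_filter_not univ (fun S : Finset (Fin n) => S.Nonempty)]
    congr 1
    have : univ.filter (fun S : Finset (Fin n) => ¬S.Nonempty) = {∅} := by
      ext S; simp [Finset.not_nonempty_iff_eq_empty]
    rw [this]
    simp
  have h4 : ∑ S : Finset (Fin n), numRankings (n - S.card)
      = ∑ k ∈ range (n + 1), n.choose k * numRankings (n - k) := by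
    rw [← Finset.powerset_univ, Finset.sum_powerset]
    simp only [Finset.card_univ, Fintype.card_fin]
    refine Finset.sum_congr rfl fun k _ => ?_
    rw [Finset.sum_congr rfl (fun S hS => by
      rw [(Finset.mem_powersetCard.mp hS).2]), Finset.sum_const,
      Finset.card_powersetCard, smul_eq_mul, Finset.card_univ, Fintype.card_fin]
  omega

open PowerSeries in
private noncomputable def Aser : ℚ⟦X⟧ :=
  PowerSeries.mk fun n => (numRankings n : ℚ) / n.factorial

open PowerSeries in
private lemma key : exp ℚ * Aser = Aser + Aser - 1 := by
  ext n
  rw [coeff_mul, Finset.Nat.sum_antidiagonal_eq_sum_range_succ_mk]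
  have hterm : ∀ k ∈ range (n + 1),
      (coeff k) (exp ℚ) * (coeff (n - k)) Aser
        = ((n.choose k * numRankings (n - k) : ℕ) : ℚ) / n.factorial := by
    intro k hk
    have hk' : k ≤ n := by simpa using Nat.lt_succ_iff.mp (Finset.mem_range.mp hk)
    have h := Nat.choose_mul_factorial_mul_factorial hk'
    have h2 : ((n.choose k : ℚ)) * k.factorial * (n - k).factorial = n.factorial := by
      exact_mod_cast congrArg Nat.cast h
    rw [coeff_exp, Aser, coeff_mk]
    push_cast
    rw [eq_div_iff (by positivity)]
    field_simp
    linear_combination -(numRankings (n - k) : ℚ) * h2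
  rw [Finset.sum_congr rfl hterm]
  rw [← Finset.sum_div, ← Nat.cast_sum]
  rcases eq_or_ne n 0 with rfl | hn
  · simp [Aser, coeff_mk, numRankings_zero]
  · rw [rankings_rec n hn]
    simp [Aser, coeff_mk, coeff_one, hn]

    ring

/-- The exponential generating function of the numbers of rankings (with the `0`-th
coefficient set to `0`) satisfies `∑_{n} r_n x^n/n! = (e^x − 1)/(2 − e^x)`, i.e.
`(2 − e^x) · ∑_n r_n x^n/n! = e^x − 1` as formal power series over `ℚ`. -/
theorem rankings_egf :
    (2 - PowerSeries.exp ℚ) *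
        PowerSeries.mk (fun n => if n = 0 then 0 else (numRankings n : ℚ) / n.factorial) =
      PowerSeries.exp ℚ - 1 := by
  have hFA : PowerSeries.mk (fun n => if n = 0 then 0 else (numRankings n : ℚ) / n.factorial)
      = Aser - 1 := by
    ext n
    rcases eq_or_ne n 0 with rfl | hn
    · simp [Aser, PowerSeries.coeff_mk, numRankings_zero]
    · simp [Aser, PowerSeries.coeff_mk, PowerSeries.coeff_one, hn]
  rw [hFA]
  linear_combination -key
end
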